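/- In the d-dimensional torus T_L^d with L even, every non-empty (r,b)-robust set (for two-way r-bootstrap percolation, 2 ≤ r ≤ d) intersects at least 2^{r-1} pairwise disjoint (r,w)-robust sets. -/

import Mathlib

open scoped Classical ENNReal
open MeasureTheory Filter

/-- Vertices of the `d`-dimensional torus with side length `L`. -/
abbrev TorusV (d L : ℕ) := Fin d → ZMod L

/-- The `d`-dimensional torus graph `T_L^d`: two nodes are adjacent iff they differ
by `±1 (mod L)` in exactly one coordinate. -/
def torusGraph (d L : ℕ) : SimpleGraph (TorusV d L) where
  Adj v u := v ≠ u ∧ ∃ j, (u j = v j + 1 ∨ u j = v j - 1) ∧ ∀ k, k ≠ j → u k = v k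
  symm := by
    constructor
    rintro v u ⟨hne, j, hj, hk⟩
    refine ⟨hne.symm, j, ?_, fun k hkj => (hk k hkj).symm⟩
    rcases hj with h | h
    · right; rw [h]; ring
    · left; rw [h]; ring
  loopless := by constructor; rintro v ⟨hne, -⟩; exact hne rfl

/-- One round of two-way `r`-bootstrap percolation on a finite graph:
a node is black in the next round iff it has at least `r` black neighbors. -/
noncomputable def gStep {V : Type*} [Fintype V] (G : SimpleGraph V) (r : ℕ)
    (C : V → Bool) : V → Bool :=
  fun v => decide (r ≤ (Finset.univ.filter (fun u => G.Adj v u ∧ C u = true)).card)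

/-- One round of (ordinary) `r`-bootstrap percolation: black nodes stay black, and a white
node becomes black iff it has at least `r` black neighbors. -/
noncomputable def bpStep {V : Type*} [Fintype V] (G : SimpleGraph V) (r : ℕ)
    (C : V → Bool) : V → Bool :=
  fun v => C v || decide (r ≤ (Finset.univ.filter (fun u => G.Adj v u ∧ C u = true)).card)

/-- One round of the majority model: each node adopts the most frequent color among its
neighbors, keeping its own color in case of a tie. -/
noncomputable def majStep {V : Type*} [Fintype V] (G : SimpleGraph V)
    (C : V → Bool) : V → Bool :=
  fun v =>
    let b := (Finset.univ.filter (fun u => G.Adj v u ∧ C u = true)).card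
    let w := (Finset.univ.filter (fun u => G.Adj v u ∧ C u = false)).card
    if w < b then true else if b < w then false else C v

/-- `S` is an `(r,c)`-robust set in two-way `r`-BP: whenever all nodes of `S` have color `c`,
they keep color `c` in all subsequent configurations. (`true` = black, `false` = white.) -/
noncomputable def isRobust {V : Type*} [Fintype V] (G : SimpleGraph V) (r : ℕ) (c : Bool)
    (S : Finset V) : Prop :=
  ∀ C : V → Bool, (∀ v ∈ S, C v = c) → ∀ t, ∀ v ∈ S, (gStep G r)^[t] C v = c

/-- `S` is a b-eternal set in two-way `r`-BP: whenever all nodes of `S` are black, every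
subsequent configuration contains at least one black node. -/
noncomputable def isBEternal {V : Type*} [Fintype V] (G : SimpleGraph V) (r : ℕ)
    (S : Finset V) : Prop :=
  ∀ C : V → Bool, (∀ v ∈ S, C v = true) → ∀ t, ∃ v, (gStep G r)^[t] C v = true

/-- The node of a hyper-square at start `i` obtained by incrementing the coordinates in `S`. -/
def hsNode {d L : ℕ} (i : TorusV d L) (S : Finset (Fin d)) : TorusV d L :=
  fun j => if j ∈ S then i j + 1 else i j

/-- The hyper-square with starting node `i` and coordinate set `J` (an `J.card`-dimensional
hyper-square). -/
noncomputable def hyperSquare {d L : ℕ} (i : TorusV d L) (J : Finset (Fin d)) :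
    Finset (TorusV d L) :=
  J.powerset.image (hsNode i)

/-- The even-part of the hyper-square: nodes differing from the start in an even number of
coordinates. -/
noncomputable def evenPart {d L : ℕ} (i : TorusV d L) (J : Finset (Fin d)) :
    Finset (TorusV d L) :=
  (J.powerset.filter (fun S => Even S.card)).image (hsNode i)

/-- The odd-part of the hyper-square: nodes differing from the start in an odd number of
coordinates. -/
noncomputable def oddPart {d L : ℕ} (i : TorusV d L) (J : Finset (Fin d)) :
    Finset (TorusV d L) :=
  (J.powerset.filter (fun S => Odd S.card)).image (hsNode i)

/-- The hyper-rectangle of size `l 0 × ⋯ × l (d-1)` starting at node `i`. -/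
noncomputable def hyperRect {d L : ℕ} [NeZero L] (i : TorusV d L) (l : Fin d → ℕ) :
    Finset (TorusV d L) :=
  Finset.univ.filter (fun v => ∀ j, ∃ m : ℕ, m ≤ l j ∧ v j = i j + (m : ZMod L))

/-- The parity of a hyper-square of the tiling: parity of the sum of the last `d - r`
coordinates of its starting node. -/
def tpar (d L r : ℕ) (i : TorusV d L) : ℕ :=
  (∑ j ∈ Finset.univ.filter (fun j : Fin d => r ≤ (j : ℕ)), (i j).val) % 2

/-- A hyper-square of the tiling (start `i`, coordinate set = first `r` coordinates) is
occupied: its even-part is fully black if its parity is even, and its odd-part is fully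
black if its parity is odd. -/
noncomputable def occupiedHS (d L r : ℕ) (i : TorusV d L) (C : TorusV d L → Bool) : Prop :=
  if tpar d L r i = 0 then
    ∀ v ∈ evenPart i (Finset.univ.filter (fun j : Fin d => (j : ℕ) < r)), C v = true
  else
    ∀ v ∈ oddPart i (Finset.univ.filter (fun j : Fin d => (j : ℕ) < r)), C v = true

/-- The Bernoulli measure on `Bool` with success (black) probability `p` (clamped to `1`). -/
noncomputable def bernoulliMeasure (p : ℝ≥0∞) : Measure Bool :=
  (PMF.bernoulli (min p 1).toNNReal
    (by simpa using ENNReal.toNNReal_mono ENNReal.one_ne_top (min_le_right p 1))).toMeasure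

/-- The product measure on configurations: each node is independently black with
probability `p`. -/
noncomputable def productMeasure (V : Type*) [Fintype V] (p : ℝ≥0∞) :
    Measure (V → Bool) :=
  Measure.pi (fun _ : V => bernoulliMeasure p)

/-! ### Auxiliary machinery -/

section Aux

/-- An arc on the cycle `ZMod L`: `{s, s+1, …, s+n-1}`. -/
noncomputable def zarc (L : ℕ) (s : ZMod L) (n : ℕ) : Finset (ZMod L) :=
  (Finset.range n).image (fun m : ℕ => s + (m : ZMod L))

lemma mem_zarc {L : ℕ} {s x : ZMod L} {n : ℕ} :
    x ∈ zarc L s n ↔ ∃ i, i < n ∧ s + (i : ZMod L) = x := by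
  constructor
  · intro h
    obtain ⟨i, hi, hx⟩ := Finset.mem_image.1 h
    exact ⟨i, Finset.mem_range.1 hi, hx⟩
  · rintro ⟨i, hi, hx⟩
    exact Finset.mem_image.2 ⟨i, Finset.mem_range.2 hi, hx⟩

lemma natCast_inj_lt {L : ℕ} [NeZero L] {i j : ℕ} (hi : i < L) (hj : j < L)
    (h : (i : ZMod L) = j) : i = j := by
  have h1 := ZMod.val_cast_of_lt hi
  have h2 := ZMod.val_cast_of_lt hj
  rw [← h1, ← h2, h]

lemma right_not_mem_zarc {L : ℕ} [NeZero L] {s : ZMod L} {n : ℕ} (hn : n < L) :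
    s + (n : ZMod L) ∉ zarc L s n := by
  rw [mem_zarc]
  rintro ⟨i, hi, h⟩
  have := natCast_inj_lt (lt_trans hi hn) hn (add_left_cancel h)
  omega

lemma left_not_mem_zarc {L : ℕ} [NeZero L] {s : ZMod L} {n : ℕ} (hn : n < L) :
    s - 1 ∉ zarc L s n := by
  rw [mem_zarc]
  rintro ⟨i, hi, h⟩
  have hL : 1 ≤ L := Nat.one_le_iff_ne_zero.2 (NeZero.ne L)
  have h1 : (i : ZMod L) = -1 := by linear_combination h
  have h2 : ((L - 1 : ℕ) : ZMod L) = -1 := by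
    push_cast [Nat.cast_sub hL]
    simp [ZMod.natCast_self]
  have := natCast_inj_lt (lt_trans hi hn) (by omega) (h1.trans h2.symm)
  omega

lemma zarc_univ {L : ℕ} [NeZero L] (s : ZMod L) : zarc L s L = Finset.univ := by
  apply Finset.eq_univ_of_forall
  intro x
  rw [mem_zarc]
  exact ⟨(x - s).val, (x - s).val_lt, by rw [ZMod.natCast_val, ZMod.cast_id]; ring⟩

lemma zarc_mono {L : ℕ} {s : ZMod L} {n0 n : ℕ} (h : n0 ≤ n) : zarc L s n0 ⊆ zarc L s n := by
  intro x hx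
  rw [mem_zarc] at hx ⊢
  obtain ⟨i, hi, hx⟩ := hx
  exact ⟨i, lt_of_lt_of_le hi h, hx⟩

lemma zarc_suffix_subset {L : ℕ} {s : ZMod L} {k m n : ℕ} (h : k + m ≤ n) :
    zarc L (s + (k : ZMod L)) m ⊆ zarc L s n := by
  intro x hx
  rw [mem_zarc] at hx ⊢
  obtain ⟨i, hi, hx⟩ := hx
  exact ⟨k + i, by omega, by rw [Nat.cast_add, ← add_assoc]; exact hx⟩

/-- The splitting lemma: an arc containing an adjacent pair `c, c+1` can be split into
two disjoint sub-arcs separating the pair, each with the "at most one crossing" property. -/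
lemma zarc_split {L : ℕ} [NeZero L] (hL : 4 ≤ L) {s : ZMod L} {n : ℕ} (hn : n ≤ L)
    {c : ZMod L} (hc : c ∈ zarc L s n) (hc1 : c + 1 ∈ zarc L s n) :
    ∃ (s0 : ZMod L) (n0 : ℕ) (s1 : ZMod L) (n1 : ℕ),
      n0 ≤ L ∧ n1 ≤ L ∧
      zarc L s0 n0 ⊆ zarc L s n ∧ zarc L s1 n1 ⊆ zarc L s n ∧
      Disjoint (zarc L s0 n0) (zarc L s1 n1) ∧
      c ∈ zarc L s0 n0 ∧ c + 1 ∈ zarc L s1 n1 ∧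
      (∀ x ∈ zarc L s0 n0,
        x - 1 ∈ zarc L s0 n0 ∨ x - 1 ∉ zarc L s n ∨ x + 1 ∈ zarc L s0 n0 ∨ x + 1 ∉ zarc L s n) ∧
      (∀ x ∈ zarc L s1 n1,
        x - 1 ∈ zarc L s1 n1 ∨ x - 1 ∉ zarc L s n ∨ x + 1 ∈ zarc L s1 n1 ∨ x + 1 ∉ zarc L s n) := by
  rcases eq_or_lt_of_le hn with hnL | hnL
  · -- n = L : the arc is the whole circle
    have hA : zarc L s n = Finset.univ := by rw [hnL]; exact zarc_univ s
    refine ⟨c + 3, L - 2, c + 1, 2, by omega, by omega, by rw [hA]; exact Finset.subset_univ _,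
      by rw [hA]; exact Finset.subset_univ _, ?_, ?_, ?_, ?_, ?_⟩
    · -- disjoint
      rw [Finset.disjoint_left]
      intro x hx0 hx1
      rw [mem_zarc] at hx0 hx1
      obtain ⟨i, hi, hx0⟩ := hx0
      obtain ⟨i', hi', hx1⟩ := hx1
      have he : (i' : ZMod L) = ((2 + i : ℕ) : ZMod L) := by
        push_cast
        linear_combination hx1 - hx0
      have := natCast_inj_lt (by omega) (by omega) he
      omega
    · -- c ∈ P0
      rw [mem_zarc]
      refine ⟨L - 3, by omega, ?_⟩
      have h3 : ((L - 3 : ℕ) : ZMod L) = -3 := by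
        push_cast [Nat.cast_sub (show 3 ≤ L by omega)]
        simp [ZMod.natCast_self]
      rw [h3]; ring
    · -- c + 1 ∈ P1
      rw [mem_zarc]; exact ⟨0, by omega, by push_cast; ring⟩
    · -- crossing P0
      intro x hx
      rw [mem_zarc] at hx
      obtain ⟨i, hi, rfl⟩ := hx
      rcases Nat.eq_zero_or_pos i with h0 | h0
      · subst h0
        refine Or.inr (Or.inr (Or.inl ?_))
        rw [mem_zarc]
        exact ⟨1, by omega, by push_cast; ring⟩
      · refine Or.inl ?_
        rw [mem_zarc]
        refine ⟨i - 1, by omega, ?_⟩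
        push_cast [Nat.cast_sub (by omega : 1 ≤ i)]
        ring
    · -- crossing P1
      intro x hx
      rw [mem_zarc] at hx
      obtain ⟨i, hi, rfl⟩ := hx
      interval_cases i
      · refine Or.inr (Or.inr (Or.inl ?_))
        rw [mem_zarc]; exact ⟨1, by omega, by push_cast; ring⟩
      · refine Or.inl ?_
        rw [mem_zarc]; exact ⟨0, by omega, by push_cast; ring⟩
  · -- n < L
    rw [mem_zarc] at hc hc1
    obtain ⟨k, hk, hck⟩ := hc
    obtain ⟨i, hi, hci⟩ := hc1
    have hik : (i : ZMod L) = ((k + 1 : ℕ) : ZMod L) := by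
      push_cast
      linear_combination hci - hck
    have hi' : i = k + 1 := natCast_inj_lt (by omega) (by omega) hik
    have hkn : k + 1 < n := by omega
    refine ⟨s, k + 1, s + ((k + 1 : ℕ) : ZMod L), n - (k + 1), by omega, by omega,
      zarc_mono (by omega), zarc_suffix_subset (by omega), ?_, ?_, ?_, ?_, ?_⟩
    · rw [Finset.disjoint_left]
      intro x hx0 hx1
      rw [mem_zarc] at hx0 hx1
      obtain ⟨a, ha, hx0⟩ := hx0
      obtain ⟨b, hb, hx1⟩ := hx1
      have he : (a : ZMod L) = ((k + 1 + b : ℕ) : ZMod L) := by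
        push_cast
        push_cast at hx1
        linear_combination hx0 - hx1
      have := natCast_inj_lt (by omega) (by omega) he
      omega
    · rw [mem_zarc]; exact ⟨k, by omega, hck⟩
    · rw [mem_zarc]
      refine ⟨0, by omega, ?_⟩
      push_cast
      linear_combination hck
    · -- crossing P0 (left part abuts the left boundary of A)
      intro x hx
      rw [mem_zarc] at hx
      obtain ⟨a, ha, rfl⟩ := hx
      rcases Nat.eq_zero_or_pos a with h0 | h0
      · subst h0
        refine Or.inr (Or.inl ?_)
        have : s + ((0 : ℕ) : ZMod L) - 1 = s - 1 := by push_cast; ring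
        rw [this]
        exact left_not_mem_zarc hnL
      · refine Or.inl ?_
        rw [mem_zarc]
        refine ⟨a - 1, by omega, ?_⟩
        push_cast [Nat.cast_sub (by omega : 1 ≤ a)]
        ring
    · -- crossing P1 (right part abuts the right boundary of A)
      intro x hx
      rw [mem_zarc] at hx
      obtain ⟨a, ha, rfl⟩ := hx
      rcases Nat.lt_or_ge a (n - (k + 1) - 1) with h0 | h0
      · refine Or.inr (Or.inr (Or.inl ?_))
        rw [mem_zarc]
        exact ⟨a + 1, by omega, by push_cast; ring⟩
      · have ha' : a = n - (k + 1) - 1 := by omega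
        subst ha'
        refine Or.inr (Or.inr (Or.inr ?_))
        have : s + ((k + 1 : ℕ) : ZMod L) + ((n - (k + 1) - 1 : ℕ) : ZMod L) + 1
            = s + ((n : ℕ) : ZMod L) := by
          push_cast [Nat.cast_sub (by omega : k + 1 ≤ n),
            Nat.cast_sub (by omega : 1 ≤ n - (k + 1))]
          ring
        rw [this]
        exact right_not_mem_zarc hnL

/-- The box (product of coordinate sets) determined by `A`. -/
noncomputable def tbox {d L : ℕ} [NeZero L] (A : Fin d → Finset (ZMod L)) :
    Finset (TorusV d L) :=
  Finset.univ.filter (fun v => ∀ j, v j ∈ A j)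

lemma mem_tbox {d L : ℕ} [NeZero L] {A : Fin d → Finset (ZMod L)} {v : TorusV d L} :
    v ∈ tbox A ↔ ∀ j, v j ∈ A j := by
  simp [tbox]

/-- A set all of whose elements have at most `r - 1` neighbors outside it is
`(r,w)`-robust. -/
lemma robust_of_small_boundary {V : Type*} [Fintype V] (G : SimpleGraph V) (r : ℕ)
    (hr : 1 ≤ r) (W : Finset V)
    (h : ∀ v ∈ W, (Finset.univ.filter (fun u => G.Adj v u ∧ u ∉ W)).card ≤ r - 1) :
    isRobust G r false W := by
  intro C hC t
  induction t with
  | zero => simpa using hC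
  | succ t ih =>
    intro v hv
    rw [Function.iterate_succ_apply']
    have hsub : (Finset.univ.filter (fun u => G.Adj v u ∧ (gStep G r)^[t] C u = true))
        ⊆ (Finset.univ.filter (fun u => G.Adj v u ∧ u ∉ W)) := by
      intro u hu
      simp only [Finset.mem_filter] at hu ⊢
      refine ⟨hu.1, hu.2.1, fun hW => ?_⟩
      rw [ih u hW] at hu
      exact absurd hu.2.2 (by simp)
    have hcard := le_trans (Finset.card_le_card hsub) (h v hv)
    simp only [gStep]
    rw [decide_eq_false_iff_not]
    omega

/-- Every node of a black-robust set has at least `r` neighbors inside the set. -/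
lemma deg_of_robust {V : Type*} [Fintype V] (G : SimpleGraph V) (r : ℕ) (S : Finset V)
    (hrob : isRobust G r true S) :
    ∀ v ∈ S, r ≤ (Finset.univ.filter (fun u => G.Adj v u ∧ u ∈ S)).card := by
  intro v hv
  have h := hrob (fun u => decide (u ∈ S)) (fun u hu => by simp [hu]) 1 v hv
  rw [Function.iterate_one] at h
  simp only [gStep, decide_eq_true_eq] at h
  exact h

end Aux



lemma card_filter_le_of_instances {α : Type*} {p : α → Prop} {h1 h2 : DecidablePred p}
    {s : Finset α} {k : ℕ} (h : (@Finset.filter α p h1 s).card ≤ k) :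
    (@Finset.filter α p h2 s).card ≤ k := by
  have he : h1 = h2 := Subsingleton.elim _ _
  subst he; exact h

lemma le_card_filter_of_instances {α : Type*} {p : α → Prop} {h1 h2 : DecidablePred p}
    {s : Finset α} {k : ℕ} (h : k ≤ (@Finset.filter α p h1 s).card) :
    k ≤ (@Finset.filter α p h2 s).card := by
  have he : h1 = h2 := Subsingleton.elim _ _
  subst he; exact h

section Main

variable {d L : ℕ} [NeZero L]

/-- The key recursive splitting lemma. -/
lemma main_split (hL : 4 ≤ L) (m : ℕ) :
    ∀ (K : ℕ) (A : Fin d → Finset (ZMod L)),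
    (∀ j, ∃ s n, n ≤ L ∧ A j = zarc L s n) →
    ∀ S' : Finset (TorusV d L), S'.Nonempty → S' ⊆ tbox A →
    (∀ v ∈ S', m ≤ (Finset.univ.filter
        (fun u => (torusGraph d L).Adj v u ∧ u ∈ S')).card) →
    (∀ v ∈ tbox A, (Finset.univ.filter
        (fun u => (torusGraph d L).Adj v u ∧ u ∉ tbox A)).card ≤ K) →
    ∃ W : Fin (2 ^ m) → Finset (TorusV d L),
      (∀ a, W a ⊆ tbox A) ∧
      (∀ a, ∀ v ∈ W a, (Finset.univ.filter
          (fun u => (torusGraph d L).Adj v u ∧ u ∉ W a)).card ≤ K + m) ∧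
      (∀ a b, a ≠ b → Disjoint (W a) (W b)) ∧
      (∀ a, (W a ∩ S').Nonempty) := by
  induction m with
  | zero =>
    intro K A hA S' hne hsub hdeg hout
    refine ⟨fun _ => tbox A, fun _ => subset_rfl,
      fun a v hv => by simpa using hout v hv,
      fun a b hab => absurd (Fin.ext (by
        have ha := a.isLt; have hb := b.isLt
        simp only [pow_zero] at ha hb; omega)) hab,
      fun a => ?_⟩
    obtain ⟨x, hx⟩ := hne
    exact ⟨x, Finset.mem_inter.2 ⟨hsub hx, hx⟩⟩
  | succ m ih =>
    intro K A hA S' hne hsub hdeg hout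
    -- find an adjacent pair inside S'
    obtain ⟨v0, hv0⟩ := hne
    have hd := hdeg v0 hv0
    have hpos : 0 < (Finset.univ.filter
        (fun u => (torusGraph d L).Adj v0 u ∧ u ∈ S')).card := by omega
    obtain ⟨u0, hu0⟩ := Finset.card_pos.1 hpos
    rw [Finset.mem_filter] at hu0
    obtain ⟨-, hadj, hu0S⟩ := hu0
    obtain ⟨hne0, j, hj, hkeq⟩ := hadj
    have hexists : ∃ (c : ZMod L) (p0 p1 : TorusV d L),
        p0 ∈ S' ∧ p1 ∈ S' ∧ p0 j = c ∧ p1 j = c + 1 := by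
      rcases hj with h1 | h2
      · exact ⟨v0 j, v0, u0, hv0, hu0S, rfl, h1⟩
      · exact ⟨u0 j, u0, v0, hu0S, hv0, rfl, by rw [h2]; ring⟩
    obtain ⟨c, p0, p1, hp0S, hp1S, hp0j, hp1j⟩ := hexists
    obtain ⟨s, n, hnL, hAj⟩ := hA j
    have hcA : c ∈ A j := by rw [← hp0j]; exact (mem_tbox.1 (hsub hp0S)) j
    have hc1A : c + 1 ∈ A j := by rw [← hp1j]; exact (mem_tbox.1 (hsub hp1S)) j
    rw [hAj] at hcA hc1A
    obtain ⟨s0, n0, s1, n1, hn0, hn1, hsub0, hsub1, hdisjP, hc0, hc11, hcr0, hcr1⟩ :=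
      zarc_split hL hnL hcA hc1A
    rw [← hAj] at hsub0 hsub1 hcr0 hcr1
    -- the branch construction
    have branch : ∀ P : Finset (ZMod L), (∃ s' n', n' ≤ L ∧ P = zarc L s' n') →
        P ⊆ A j →
        (∀ x ∈ P, x - 1 ∈ P ∨ x - 1 ∉ A j ∨ x + 1 ∈ P ∨ x + 1 ∉ A j) →
        ∀ p, p ∈ S' → p j ∈ P →
        ∃ W : Fin (2 ^ m) → Finset (TorusV d L),
          (∀ a, W a ⊆ tbox (Function.update A j P)) ∧
          (∀ a, ∀ v ∈ W a, (Finset.univ.filter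
              (fun u => (torusGraph d L).Adj v u ∧ u ∉ W a)).card ≤ K + 1 + m) ∧
          (∀ a b, a ≠ b → Disjoint (W a) (W b)) ∧
          (∀ a, (W a ∩ S').Nonempty) := by
      intro P hParc hPsub hcr p hpS hpj
      set A' := Function.update A j P with hA'
      have hboxsub : tbox A' ⊆ tbox A := by
        intro v hv
        rw [mem_tbox] at hv ⊢
        intro k
        by_cases hk : k = j
        · subst hk
          have := hv k
          rw [hA'] at this
          simp only [Function.update_self] at this
          exact hPsub this
        · have := hv k
          rw [hA'] at this
          simpa only [Function.update_of_ne hk] using this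
      have hA'arc : ∀ k, ∃ s' n', n' ≤ L ∧ A' k = zarc L s' n' := by
        intro k
        by_cases hk : k = j
        · subst hk
          obtain ⟨s', n', h1, h2⟩ := hParc
          exact ⟨s', n', h1, by rw [hA']; simp only [Function.update_self]; exact h2⟩
        · obtain ⟨s', n', h1, h2⟩ := hA k
          exact ⟨s', n', h1, by rw [hA']; simp only [Function.update_of_ne hk]; exact h2⟩
      -- the crossing bound
      have hcross : ∀ v ∈ tbox A', (Finset.univ.filter
          (fun u => (torusGraph d L).Adj v u ∧ u ∈ tbox A ∧ u ∉ tbox A')).card ≤ 1 := by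
        intro v hv
        have hvj : v j ∈ P := by
          have := mem_tbox.1 hv j
          rw [hA'] at this
          simpa only [Function.update_self] using this
        -- any element of the filtered set is the ±1 neighbor of v in direction j
        have hshape : ∀ u, (torusGraph d L).Adj v u → u ∈ tbox A → u ∉ tbox A' →
            ((u = Function.update v j (v j + 1) ∧ v j + 1 ∈ A j ∧ v j + 1 ∉ P) ∨
             (u = Function.update v j (v j - 1) ∧ v j - 1 ∈ A j ∧ v j - 1 ∉ P)) := by
          intro u huadj huA huA'
          obtain ⟨hneu, j2, hj2, hkeq2⟩ := huadj
          have hj2j : j2 = j := by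
            by_contra hjj
            apply huA'
            rw [mem_tbox]
            intro k
            by_cases hk : k = j
            · subst hk
              have hukvk : u k = v k := hkeq2 k (fun h => hjj h.symm)
              rw [hA']
              simp only [Function.update_self]
              rw [hukvk]
              exact hvj
            · rw [hA']
              simp only [Function.update_of_ne hk]
              exact mem_tbox.1 huA k
          rw [hj2j] at hj2 hkeq2
          have hujA : u j ∈ A j := mem_tbox.1 huA j
          have hujP : u j ∉ P := by
            intro hP
            apply huA'
            rw [mem_tbox]
            intro k
            by_cases hk : k = j
            · subst hk
              rw [hA']
              simp only [Function.update_self]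
              exact hP
            · rw [hA']
              simp only [Function.update_of_ne hk]
              exact mem_tbox.1 huA k
          have hufun : ∀ x, u j = x → u = Function.update v j x := by
            intro x hx
            funext k
            by_cases hk : k = j
            · subst hk
              simp only [Function.update_self]
              exact hx
            · simp only [Function.update_of_ne hk]
              exact hkeq2 k hk
          rcases hj2 with h1 | h1
          · exact Or.inl ⟨hufun _ h1, h1 ▸ hujA, h1 ▸ hujP⟩
          · exact Or.inr ⟨hufun _ h1, h1 ▸ hujA, h1 ▸ hujP⟩
        rcases hcr (v j) hvj with hc | hc | hc | hc
        · -- v j - 1 ∈ P : the only possible crossing is +1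
          refine le_trans (Finset.card_le_card (fun u hu =>
            (?_ : u ∈ ({Function.update v j (v j + 1)} : Finset (TorusV d L)))))
            (le_of_eq (Finset.card_singleton _))
          rw [Finset.mem_filter] at hu
          obtain ⟨-, huadj, huA, huA'⟩ := hu
          rcases hshape u huadj huA huA' with ⟨h1, -, -⟩ | ⟨h1, -, h3⟩
          · rw [Finset.mem_singleton]; exact h1
          · exact absurd hc h3
        · refine le_trans (Finset.card_le_card (fun u hu =>
            (?_ : u ∈ ({Function.update v j (v j + 1)} : Finset (TorusV d L)))))
            (le_of_eq (Finset.card_singleton _))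
          rw [Finset.mem_filter] at hu
          obtain ⟨-, huadj, huA, huA'⟩ := hu
          rcases hshape u huadj huA huA' with ⟨h1, -, -⟩ | ⟨h1, h2, -⟩
          · rw [Finset.mem_singleton]; exact h1
          · exact absurd h2 hc
        · refine le_trans (Finset.card_le_card (fun u hu =>
            (?_ : u ∈ ({Function.update v j (v j - 1)} : Finset (TorusV d L)))))
            (le_of_eq (Finset.card_singleton _))
          rw [Finset.mem_filter] at hu
          obtain ⟨-, huadj, huA, huA'⟩ := hu
          rcases hshape u huadj huA huA' with ⟨h1, -, h3⟩ | ⟨h1, -, -⟩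
          · exact absurd hc h3
          · rw [Finset.mem_singleton]; exact h1
        · refine le_trans (Finset.card_le_card (fun u hu =>
            (?_ : u ∈ ({Function.update v j (v j - 1)} : Finset (TorusV d L)))))
            (le_of_eq (Finset.card_singleton _))
          rw [Finset.mem_filter] at hu
          obtain ⟨-, huadj, huA, huA'⟩ := hu
          rcases hshape u huadj huA huA' with ⟨h1, h2, -⟩ | ⟨h1, -, -⟩
          · exact absurd h2 hc
          · rw [Finset.mem_singleton]; exact h1
      -- the new candidate set
      set S'' := S'.filter (fun u => u ∈ tbox A') with hS''
      have hS''sub : S'' ⊆ tbox A' := fun u hu => (Finset.mem_filter.1 hu).2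
      have hS''S : S'' ⊆ S' := Finset.filter_subset _ _
      have hpS'' : p ∈ S'' := by
        rw [hS'', Finset.mem_filter]
        refine ⟨hpS, ?_⟩
        rw [mem_tbox]
        intro k
        by_cases hk : k = j
        · subst hk
          rw [hA']
          simp only [Function.update_self]
          exact hpj
        · rw [hA']
          simp only [Function.update_of_ne hk]
          exact mem_tbox.1 (hsub hpS) k
      have hdeg'' : ∀ v ∈ S'', m ≤ (Finset.univ.filter
          (fun u => (torusGraph d L).Adj v u ∧ u ∈ S'')).card := by
        intro v hv
        have hvS' : v ∈ S' := hS''S hv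
        have h1 := hdeg v hvS'
        have h2 := hcross v (hS''sub hv)
        have hsubu : (Finset.univ.filter (fun u => (torusGraph d L).Adj v u ∧ u ∈ S'))
            ⊆ (Finset.univ.filter (fun u => (torusGraph d L).Adj v u ∧ u ∈ S''))
            ∪ (Finset.univ.filter
              (fun u => (torusGraph d L).Adj v u ∧ u ∈ tbox A ∧ u ∉ tbox A')) := by
          intro u hu
          simp only [Finset.mem_filter, Finset.mem_univ, true_and] at hu
          obtain ⟨hu2, hu3⟩ := hu
          simp only [Finset.mem_union, Finset.mem_filter, Finset.mem_univ, true_and, hS'']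
          by_cases hA'u : u ∈ tbox A'
          · exact Or.inl ⟨hu2, hu3, hA'u⟩
          · exact Or.inr ⟨hu2, hsub hu3, hA'u⟩
        have := le_trans (Finset.card_le_card hsubu) (Finset.card_union_le _ _)
        omega
      have hout'' : ∀ v ∈ tbox A', (Finset.univ.filter
          (fun u => (torusGraph d L).Adj v u ∧ u ∉ tbox A')).card ≤ K + 1 := by
        intro v hv
        have h1 := hout v (hboxsub hv)
        have h2 := hcross v hv
        have hsubu : (Finset.univ.filter (fun u => (torusGraph d L).Adj v u ∧ u ∉ tbox A'))
            ⊆ (Finset.univ.filter (fun u => (torusGraph d L).Adj v u ∧ u ∉ tbox A))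
            ∪ (Finset.univ.filter
              (fun u => (torusGraph d L).Adj v u ∧ u ∈ tbox A ∧ u ∉ tbox A')) := by
          intro u hu
          simp only [Finset.mem_filter, Finset.mem_univ, true_and] at hu
          obtain ⟨hu2, hu3⟩ := hu
          simp only [Finset.mem_union, Finset.mem_filter, Finset.mem_univ, true_and]
          by_cases hAu : u ∈ tbox A
          · exact Or.inr ⟨hu2, hAu, hu3⟩
          · exact Or.inl ⟨hu2, hAu⟩
        have := le_trans (Finset.card_le_card hsubu) (Finset.card_union_le _ _)
        omega
      obtain ⟨W, hW1, hW2, hW3, hW4⟩ := ih (K + 1) A' hA'arc S'' ⟨p, hpS''⟩ hS''sub hdeg'' hout''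
      refine ⟨W, hW1, hW2, hW3, fun a => ?_⟩
      obtain ⟨x, hx⟩ := hW4 a
      rw [Finset.mem_inter] at hx
      exact ⟨x, Finset.mem_inter.2 ⟨hx.1, hS''S hx.2⟩⟩
    -- apply the branch construction to both halves
    obtain ⟨W0, hW01, hW02, hW03, hW04⟩ :=
      branch (zarc L s0 n0) ⟨s0, n0, hn0, rfl⟩ hsub0 hcr0 p0 hp0S (by rw [hp0j]; exact hc0)
    obtain ⟨W1, hW11, hW12, hW13, hW14⟩ :=
      branch (zarc L s1 n1) ⟨s1, n1, hn1, rfl⟩ hsub1 hcr1 p1 hp1S (by rw [hp1j]; exact hc11)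
    have hboxsub0 : tbox (Function.update A j (zarc L s0 n0)) ⊆ tbox A := by
      intro v hv
      rw [mem_tbox] at hv ⊢
      intro k
      by_cases hk : k = j
      · subst hk
        have := hv k
        simp only [Function.update_self] at this
        exact hsub0 this
      · have := hv k
        simpa only [Function.update_of_ne hk] using this
    have hboxsub1 : tbox (Function.update A j (zarc L s1 n1)) ⊆ tbox A := by
      intro v hv
      rw [mem_tbox] at hv ⊢
      intro k
      by_cases hk : k = j
      · subst hk
        have := hv k
        simp only [Function.update_self] at this
        exact hsub1 this
      · have := hv k
        simpa only [Function.update_of_ne hk] using this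
    have hboxdisj : Disjoint (tbox (Function.update A j (zarc L s0 n0)))
        (tbox (Function.update A j (zarc L s1 n1))) := by
      rw [Finset.disjoint_left]
      intro v hv0' hv1'
      have h0 := mem_tbox.1 hv0' j
      have h1 := mem_tbox.1 hv1' j
      simp only [Function.update_self] at h0 h1
      exact Finset.disjoint_left.1 hdisjP h0 h1
    have hlt : ∀ a : Fin (2 ^ (m + 1)), (a : ℕ) < 2 ^ m + 2 ^ m := by
      intro a
      have h1 := a.isLt
      have h2 : (2 : ℕ) ^ (m + 1) = 2 ^ m + 2 ^ m := by rw [pow_succ]; omega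
      omega
    refine ⟨fun a => if h : (a : ℕ) < 2 ^ m then W0 ⟨a, h⟩
      else W1 ⟨(a : ℕ) - 2 ^ m, by have := hlt a; omega⟩, ?_, ?_, ?_, ?_⟩
    · intro a
      dsimp only
      by_cases h : (a : ℕ) < 2 ^ m
      · rw [dif_pos h]; exact (hW01 _).trans hboxsub0
      · rw [dif_neg h]; exact (hW11 _).trans hboxsub1
    · intro a v hv
      dsimp only at hv ⊢
      by_cases h : (a : ℕ) < 2 ^ m
      · simp only [dif_pos h] at hv ⊢
        have := hW02 _ v hv
        omega
      · simp only [dif_neg h] at hv ⊢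
        have := hW12 _ v hv
        omega
    · intro a b hab
      dsimp only
      by_cases ha : (a : ℕ) < 2 ^ m <;> by_cases hb : (b : ℕ) < 2 ^ m
      · rw [dif_pos ha, dif_pos hb]
        refine hW03 _ _ (fun h => hab ?_)
        have : (a : ℕ) = (b : ℕ) := by
          have := congrArg Fin.val h
          simpa using this
        exact Fin.ext this
      · rw [dif_pos ha, dif_neg hb]
        exact Finset.disjoint_of_subset_left (hW01 _)
          (Finset.disjoint_of_subset_right (hW11 _) hboxdisj)
      · rw [dif_neg ha, dif_pos hb]
        exact Finset.disjoint_of_subset_left (hW11 _)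
          (Finset.disjoint_of_subset_right (hW01 _) hboxdisj.symm)
      · rw [dif_neg ha, dif_neg hb]
        refine hW13 _ _ (fun h => hab ?_)
        have : (a : ℕ) - 2 ^ m = (b : ℕ) - 2 ^ m := by
          have := congrArg Fin.val h
          simpa using this
        have hab' : (a : ℕ) = (b : ℕ) := by omega
        exact Fin.ext hab'
    · intro a
      dsimp only
      by_cases h : (a : ℕ) < 2 ^ m
      · rw [dif_pos h]; exact hW04 _
      · rw [dif_neg h]; exact hW14 _

end Main


set_option maxHeartbeats 1000000 in
theorem stmt_4 (d L r : ℕ) [NeZero L] (hL : 4 ≤ L) (hLe : Even L) (hr : 2 ≤ r) (hrd : r ≤ d)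
    (S : Finset (TorusV d L)) (hS : S.Nonempty)
    (hrob : isRobust (torusGraph d L) r true S) :
    ∃ W : Fin (2 ^ (r - 1)) → Finset (TorusV d L),
      (∀ a, isRobust (torusGraph d L) r false (W a)) ∧
      (∀ a b, a ≠ b → Disjoint (W a) (W b)) ∧
      (∀ a, (W a ∩ S).Nonempty) := by
  have hdeg := deg_of_robust (torusGraph d L) r S hrob
  have hAinit : ∀ j : Fin d, ∃ s n, n ≤ L ∧
      (fun _ : Fin d => (Finset.univ : Finset (ZMod L))) j = zarc L s n :=
    fun _ => ⟨0, L, le_rfl, (zarc_univ 0).symm⟩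
  have hboxuniv : ∀ v : TorusV d L, v ∈ tbox (fun _ : Fin d => (Finset.univ : Finset (ZMod L))) := by
    intro v
    rw [mem_tbox]
    intro j
    exact Finset.mem_univ _
  obtain ⟨W, hW1, hW2, hW3, hW4⟩ := main_split hL (r - 1) 0
    (fun _ : Fin d => (Finset.univ : Finset (ZMod L))) hAinit S hS
    (fun v hv => hboxuniv v)
    (fun v hv => le_trans (Nat.sub_le r 1) (le_card_filter_of_instances (hdeg v hv)))
    (fun v hv => by
      have : (Finset.univ.filter
          (fun u => (torusGraph d L).Adj v u ∧
            u ∉ tbox (fun _ : Fin d => (Finset.univ : Finset (ZMod L))))) = ∅ := by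
        apply Finset.filter_false_of_mem
        intro u _
        exact fun h => h.2 (hboxuniv u)
      rw [this]
      simp)
  refine ⟨W, fun a => robust_of_small_boundary _ _ (by omega) _ (fun v hv => ?_), hW3, hW4⟩
  have h := hW2 a v hv
  exact card_filter_le_of_instances (le_trans h (by omega))
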